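/- For all natural numbers n and s with n ≥ 2s+1 and every real number x, T_n(x) = T_{n-2s}(x)·T_{2s+1}(x) + T_{n-2s-1}(x)·( T_{2s-1}(x) + x·T_{2s}(x) ) + T_{n-2s-2}(x)·T_{2s}(x), where T_{-1}(x) is interpreted as 0 (this convention is needed when n = 2s+1 or when s = 0). -/

import Mathlib

/-- The tribonacci polynomials. -/
def tribPoly : ℕ → ℝ → ℝ
  | 0, _ => 0
  | 1, _ => 1
  | 2, x => x ^ 2
  | (n + 3), x => x ^ 2 * tribPoly (n + 2) x + x * tribPoly (n + 1) x + tribPoly n x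

lemma tribPoly_rec3 (m : ℕ) (x : ℝ) :
    tribPoly (m + 3) x = x ^ 2 * tribPoly (m + 2) x + x * tribPoly (m + 1) x + tribPoly m x :=
  rfl

lemma tribPoly_rec2 (m : ℕ) (x : ℝ) :
    tribPoly (m + 2) x = x ^ 2 * tribPoly (m + 1) x + x * tribPoly m x + tribPoly (m - 1) x := by
  cases m with
  | zero => simp [tribPoly]
  | succ j => simpa using tribPoly_rec3 j x

lemma tribPoly_add (x : ℝ) (k : ℕ) : ∀ m : ℕ,
    tribPoly (m + k + 1) x =
      tribPoly (m + 1) x * tribPoly (k + 1) x +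
        tribPoly m x * (tribPoly (k - 1) x + x * tribPoly k x) +
          tribPoly (m - 1) x * tribPoly k x := by
  intro m
  induction m using Nat.strong_induction_on with
  | _ m ih =>
    match m with
    | 0 => simp [tribPoly]
    | 1 =>
      have h := tribPoly_rec2 k x
      simp only [tribPoly] at *
      rw [show 1 + k + 1 = k + 2 from by omega, h]
      ring_nf
      simp only [show tribPoly 0 x = 0 from rfl]
      ring
    | 2 =>
      have h1 := ih 1 (by omega)
      rw [show 2 + k + 1 = (k + 1) + 2 from by omega, tribPoly_rec2,
        show k + 1 + 1 = 1 + k + 1 from by omega, h1]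
      simp only [show (2:ℕ) + 1 = 3 from rfl, tribPoly_rec3, show k + 1 - 1 = k from by omega,
        tribPoly]
      ring_nf
      simp only [show tribPoly 0 x = 0 from rfl, show tribPoly 1 x = 1 from rfl]
      ring
    | (j + 3) =>
      have h0 := ih j (by omega)
      have h1 := ih (j + 1) (by omega)
      have h2 := ih (j + 2) (by omega)
      have hr : tribPoly (j + 2) x =
          x ^ 2 * tribPoly (j + 1) x + x * tribPoly j x + tribPoly (j - 1) x :=
        tribPoly_rec2 j x
      rw [show j + 3 + k + 1 = (j + k + 1) + 3 from by omega, tribPoly_rec3,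
        show j + k + 1 + 2 = (j + 2) + k + 1 from by omega,
        show j + k + 1 + 1 = (j + 1) + k + 1 from by omega, h2, h0, h1,
        show j + 3 + 1 = (j + 2) + 2 from by omega, tribPoly_rec2 (j + 2),
        show j + 2 + 1 = j + 3 from by omega, show j + 2 - 1 = j + 1 from by omega,
        show j + 3 - 1 = j + 2 from by omega, tribPoly_rec3 j, show j + 1 + 1 = j + 2 from by omega,
        show j + 1 - 1 = j from by omega, hr]
      ring

/-- For `n ≥ 2s+1`:
`T_n(x) = T_{n-2s}(x) T_{2s+1}(x) + T_{n-2s-1}(x) (T_{2s-1}(x) + x T_{2s}(x))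
  + T_{n-2s-2}(x) T_{2s}(x)`.
The convention `T_{-1}(x) = 0` (needed when `n = 2s+1` or `s = 0`) agrees with the
truncated natural subtraction here, since `tribPoly 0 x = 0 = T_{-1}(x)`. -/
theorem tribPoly_splitting (n s : ℕ) (hn : 2 * s + 1 ≤ n) (x : ℝ) :
    tribPoly n x =
      tribPoly (n - 2 * s) x * tribPoly (2 * s + 1) x +
        tribPoly (n - 2 * s - 1) x * (tribPoly (2 * s - 1) x + x * tribPoly (2 * s) x) +
          tribPoly (n - 2 * s - 2) x * tribPoly (2 * s) x := by
  obtain ⟨m, rfl⟩ : ∃ m, n = m + 2 * s + 1 := ⟨n - (2 * s + 1), by omega⟩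
  rw [show m + 2 * s + 1 - 2 * s = m + 1 from by omega,
    show m + 1 - 1 = m from by omega,
    show m + 1 - 2 = m - 1 from by omega]
  exact tribPoly_add x (2 * s) m
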